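/- For all reals β with 0 < β < π, all r > 0, ψ > 0, P₂ > 0, and all φ ∈ ℝ, ∫_{β/2}^{π−β/2} ∫₀^{P₂/ sin θ} u / ( √(1+u²) ( 1 − (u/√(1+u²)) (r/(r+2ψ)) cos(φ − θ) ) ) du dθ ≤ P₂ · ((r+2ψ)/ψ) · log( cot(β/4) ). -/

import Mathlib

open MeasureTheory

set_option maxHeartbeats 1000000 in
/-- For `0 < β < π`, `r > 0`, `ψ > 0`, `P₂ > 0` and `φ ∈ ℝ`:
`∫_{β/2}^{π-β/2} ∫₀^{P₂/sin θ} u / (√(1+u²)(1 - (u/√(1+u²))(r/(r+2ψ)) cos(φ-θ))) du dθ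
  ≤ P₂ ((r+2ψ)/ψ) log(cot(β/4))`. -/
theorem stmt_10 (β r ψ P₂ φ : ℝ) (hβ0 : 0 < β) (hβπ : β < Real.pi)
    (hr : 0 < r) (hψ : 0 < ψ) (hP₂ : 0 < P₂) :
    (∫ θ in (β / 2)..(Real.pi - β / 2), ∫ u in (0 : ℝ)..(P₂ / Real.sin θ),
        u / (Real.sqrt (1 + u ^ 2) *
          (1 - u / Real.sqrt (1 + u ^ 2) * (r / (r + 2 * ψ)) * Real.cos (φ - θ)))) ≤
      P₂ * ((r + 2 * ψ) / ψ) * Real.log (Real.cot (β / 4)) := by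
  have hr2ψ : 0 < r + 2 * ψ := by linarith
  set k : ℝ := r / (r + 2 * ψ) with hkdef
  have hk0 : 0 ≤ k := by positivity
  have hk1 : k < 1 := by rw [hkdef, div_lt_one hr2ψ]; linarith
  have h1k : 0 < 1 - k := by linarith
  set C : ℝ := 1 / (1 - k) with hCdef
  have hC : C = (r + 2 * ψ) / (2 * ψ) := by
    rw [hCdef, hkdef]; field_simp; ring
  set a := β / 2 with ha
  set b := Real.pi - β / 2 with hb
  have hab : a ≤ b := by rw [ha, hb]; linarith
  have hsin : ∀ θ ∈ Set.Icc a b, 0 < Real.sin θ := by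
    intro θ hθ
    exact Real.sin_pos_of_pos_of_lt_pi (by rw [ha] at hθ; linarith [hθ.1])
      (by rw [hb] at hθ; linarith [hθ.2])
  -- denominator lower bound
  have hD : ∀ θ u : ℝ, 0 ≤ u →
      1 - k ≤ 1 - u / Real.sqrt (1 + u ^ 2) * k * Real.cos (φ - θ) := by
    intro θ u hu
    have hs0 : 0 < Real.sqrt (1 + u ^ 2) := Real.sqrt_pos.2 (by positivity)
    have hssq : Real.sqrt (1 + u ^ 2) ^ 2 = 1 + u ^ 2 := Real.sq_sqrt (by positivity)
    have hus : u ≤ Real.sqrt (1 + u ^ 2) := by nlinarith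
    have ht0 : 0 ≤ u / Real.sqrt (1 + u ^ 2) := by positivity
    have ht1 : u / Real.sqrt (1 + u ^ 2) ≤ 1 := (div_le_one hs0).2 hus
    have hc1 : Real.cos (φ - θ) ≤ 1 := Real.cos_le_one _
    have hcm : -1 ≤ Real.cos (φ - θ) := Real.neg_one_le_cos _
    nlinarith [mul_le_mul_of_nonneg_left hc1 (mul_nonneg ht0 hk0),
      mul_le_of_le_one_left hk0 ht1]
  have hDpos : ∀ θ u : ℝ, 0 ≤ u →
      0 < Real.sqrt (1 + u ^ 2) *
        (1 - u / Real.sqrt (1 + u ^ 2) * k * Real.cos (φ - θ)) := by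
    intro θ u hu
    exact mul_pos (Real.sqrt_pos.2 (by positivity)) (lt_of_lt_of_le h1k (hD θ u hu))
  -- pointwise integrand bound
  have key : ∀ θ u : ℝ, 0 ≤ u →
      u / (Real.sqrt (1 + u ^ 2) *
        (1 - u / Real.sqrt (1 + u ^ 2) * k * Real.cos (φ - θ))) ≤ C := by
    intro θ u hu
    have hs0 : 0 < Real.sqrt (1 + u ^ 2) := Real.sqrt_pos.2 (by positivity)
    have hssq : Real.sqrt (1 + u ^ 2) ^ 2 = 1 + u ^ 2 := Real.sq_sqrt (by positivity)
    have hus : u ≤ Real.sqrt (1 + u ^ 2) := by nlinarith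
    have hDθ := hD θ u hu
    have hdp := hDpos θ u hu
    rw [hCdef, div_le_div_iff₀ hdp h1k]
    nlinarith [mul_le_mul hus hDθ h1k.le hs0.le]
  -- inner integral bound
  have inner_le : ∀ θ ∈ Set.Icc a b,
      (∫ u in (0:ℝ)..(P₂ / Real.sin θ),
        u / (Real.sqrt (1 + u ^ 2) *
          (1 - u / Real.sqrt (1 + u ^ 2) * k * Real.cos (φ - θ)))) ≤
      C * P₂ * (Real.sin θ)⁻¹ := by
    intro θ hθ
    have hsθ := hsin θ hθ
    set bu := P₂ / Real.sin θ with hbu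
    have hbu0 : 0 ≤ bu := by positivity
    have hcont : ContinuousOn (fun u =>
        u / (Real.sqrt (1 + u ^ 2) *
          (1 - u / Real.sqrt (1 + u ^ 2) * k * Real.cos (φ - θ)))) (Set.uIcc 0 bu) := by
      have hsc : Continuous fun u : ℝ => Real.sqrt (1 + u ^ 2) :=
        Real.continuous_sqrt.comp (by continuity)
      have hsne : ∀ u : ℝ, Real.sqrt (1 + u ^ 2) ≠ 0 :=
        fun u => (Real.sqrt_pos.2 (by positivity)).ne'
      have hts : Continuous fun u : ℝ => u / Real.sqrt (1 + u ^ 2) :=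
        continuous_id.div hsc hsne
      apply ContinuousOn.div continuousOn_id
      · exact (hsc.mul (continuous_const.sub
          ((hts.mul continuous_const).mul continuous_const))).continuousOn
      · intro u hu
        rw [Set.uIcc_of_le hbu0] at hu
        exact (hDpos θ u hu.1).ne'
    have hint : IntervalIntegrable (fun u =>
        u / (Real.sqrt (1 + u ^ 2) *
          (1 - u / Real.sqrt (1 + u ^ 2) * k * Real.cos (φ - θ)))) volume 0 bu :=
      hcont.intervalIntegrable
    calc (∫ u in (0:ℝ)..bu,
          u / (Real.sqrt (1 + u ^ 2) *
            (1 - u / Real.sqrt (1 + u ^ 2) * k * Real.cos (φ - θ))))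
        ≤ ∫ _u in (0:ℝ)..bu, C :=
          intervalIntegral.integral_mono_on hbu0 hint intervalIntegrable_const
            (fun u hu => key θ u hu.1)
      _ = bu * C := by
          rw [intervalIntegral.integral_const, smul_eq_mul, sub_zero]
      _ = C * P₂ * (Real.sin θ)⁻¹ := by rw [hbu]; field_simp
  -- FTC for 1/sin
  have hderiv : ∀ θ ∈ Set.uIcc a b,
      HasDerivAt (fun x => Real.log (Real.tan (x / 2))) (Real.sin θ)⁻¹ θ := by
    intro θ hθ
    rw [Set.uIcc_of_le hab] at hθ
    have h1 : 0 < θ / 2 := by rw [ha] at hθ; linarith [hθ.1]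
    have h2 : θ / 2 < Real.pi / 2 := by rw [hb] at hθ; linarith [hθ.2]
    have hcos : 0 < Real.cos (θ / 2) := Real.cos_pos_of_mem_Ioo ⟨by linarith, h2⟩
    have hsin2 : 0 < Real.sin (θ / 2) :=
      Real.sin_pos_of_pos_of_lt_pi h1 (by linarith [Real.pi_pos])
    have htan : 0 < Real.tan (θ / 2) := by
      rw [Real.tan_eq_sin_div_cos]; positivity
    have hd1 : HasDerivAt (fun x : ℝ => x / 2) (1 / 2) θ := by
      simpa using (hasDerivAt_id θ).div_const 2
    have hd2 := (Real.hasDerivAt_tan hcos.ne').comp θ hd1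
    have hd3 := (Real.hasDerivAt_log htan.ne').comp θ hd2
    refine hd3.congr_deriv ?_
    have hsθ : Real.sin θ = 2 * Real.sin (θ / 2) * Real.cos (θ / 2) := by
      rw [← Real.sin_two_mul]; ring_nf
    rw [hsθ, Real.tan_eq_sin_div_cos]
    field_simp
  have hint_inv : IntervalIntegrable (fun θ => (Real.sin θ)⁻¹) volume a b := by
    apply ContinuousOn.intervalIntegrable
    apply ContinuousOn.inv₀ Real.continuous_sin.continuousOn
    intro θ hθ
    rw [Set.uIcc_of_le hab] at hθ
    exact (hsin θ hθ).ne'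
  have hF : (∫ θ in a..b, (Real.sin θ)⁻¹) =
      Real.log (Real.tan (b / 2)) - Real.log (Real.tan (a / 2)) :=
    intervalIntegral.integral_eq_sub_of_hasDerivAt hderiv hint_inv
  set L := Real.log (Real.cot (β / 4)) with hL
  have htan_cot : Real.tan (β / 4) = (Real.cot (β / 4))⁻¹ := by
    rw [Real.cot_eq_cos_div_sin, inv_div, Real.tan_eq_sin_div_cos]
  have hFval : (∫ θ in a..b, (Real.sin θ)⁻¹) = 2 * L := by
    rw [hF]
    have hb2 : b / 2 = Real.pi / 2 - β / 4 := by rw [hb]; ring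
    have ha2 : a / 2 = β / 4 := by rw [ha]; ring
    rw [hb2, ha2, Real.tan_pi_div_two_sub, htan_cot, Real.log_inv, Real.log_inv, hL]
    ring
  have hL0 : 0 ≤ L := by
    rw [hL]
    apply Real.log_nonneg
    rw [Real.cot_eq_cos_div_sin]
    have h1 : 0 < β / 4 := by linarith
    have h2 : β / 4 < Real.pi / 4 := by linarith
    have hsin4 : 0 < Real.sin (β / 4) :=
      Real.sin_pos_of_pos_of_lt_pi h1 (by linarith [Real.pi_pos])
    rw [le_div_iff₀ hsin4, one_mul, ← Real.sin_pi_div_two_sub]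
    apply le_of_lt
    apply Real.strictMonoOn_sin ⟨by linarith [Real.pi_pos], by linarith⟩
      ⟨by linarith [Real.pi_pos], by linarith [Real.pi_pos]⟩
    linarith [Real.pi_pos]
  have hRHS : P₂ * ((r + 2 * ψ) / ψ) * L = C * P₂ * (2 * L) := by
    rw [hC]; field_simp
  by_cases hInt : IntervalIntegrable (fun θ =>
      ∫ u in (0:ℝ)..(P₂ / Real.sin θ),
        u / (Real.sqrt (1 + u ^ 2) *
          (1 - u / Real.sqrt (1 + u ^ 2) * k * Real.cos (φ - θ)))) volume a b
  · have hg_int : IntervalIntegrable (fun θ => C * P₂ * (Real.sin θ)⁻¹) volume a b :=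
      hint_inv.const_mul _
    calc (∫ θ in a..b, ∫ u in (0:ℝ)..(P₂ / Real.sin θ),
          u / (Real.sqrt (1 + u ^ 2) *
            (1 - u / Real.sqrt (1 + u ^ 2) * k * Real.cos (φ - θ))))
        ≤ ∫ θ in a..b, C * P₂ * (Real.sin θ)⁻¹ :=
          intervalIntegral.integral_mono_on hab hInt hg_int inner_le
      _ = C * P₂ * ∫ θ in a..b, (Real.sin θ)⁻¹ := by
          rw [intervalIntegral.integral_const_mul]
      _ = C * P₂ * (2 * L) := by rw [hFval]
      _ = P₂ * ((r + 2 * ψ) / ψ) * L := hRHS.symm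
  · rw [intervalIntegral.integral_undef hInt]
    have : 0 ≤ P₂ * ((r + 2 * ψ) / ψ) * L := by positivity
    exact this
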